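/- Let H be a non-elementary group of isometries of a δ-hyperbolic geodesic space X, generated by a finite symmetric set S with ℓ_X(S) := inf_{x∈X} max_{s∈S} d(x, sx) > 28δ. Then there exist a loxodromic element b ∈ S^{≤2} (a product of at most two generators), and a constant C = C(δ) > 0 and a point o ∈ X with d(o, bo) ≥ ℓ_X(S) − C. -/

import Mathlib

open Filter Topology

/-- Products of at most `n` elements of `S`. -/
def wordBall {G : Type*} [Group G] (S : Set G) (n : ℕ) : Set G :=
  {g | ∃ l : List G, l.length ≤ n ∧ (∀ x ∈ l, x ∈ S) ∧ l.prod = g}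

noncomputable def gp {X : Type*} [MetricSpace X] (o x y : X) : ℝ :=
  (dist x o + dist y o - dist x y) / 2

def IsGeodesic {X : Type*} [MetricSpace X] (f : ℝ → X) (x y : X) : Prop :=
  f 0 = x ∧ f (dist x y) = y ∧
    ∀ s ∈ Set.Icc (0 : ℝ) (dist x y), ∀ t ∈ Set.Icc (0 : ℝ) (dist x y),
      dist (f s) (f t) = |s - t|

namespace Stmt15Aux

variable {X : Type} [MetricSpace X]

lemma gp_comm (o x y : X) : gp o x y = gp o y x := by
  unfold gp; rw [dist_comm x y]; ring

lemma gp_nonneg (o x y : X) : 0 ≤ gp o x y := by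
  unfold gp
  have h := dist_triangle x o y
  rw [dist_comm o y] at h
  linarith

lemma gp_lipschitz (o u v v' : X) : gp o u v ≤ gp o u v' + dist v v' := by
  unfold gp
  have h1 := dist_triangle v v' o
  have h2 := dist_triangle u v v'
  rw [dist_comm v v'] at h1
  linarith [dist_comm v' v, dist_comm v o, dist_comm v' o]

lemma gp_add (x y z : X) : gp y x z + gp z x y = dist y z := by
  unfold gp
  rw [dist_comm z y]
  ring

lemma geo_mid {f : ℝ → X} {x y : X} (hf : IsGeodesic f x y) :
    dist x (f (dist x y / 2)) = dist x y / 2 ∧ dist (f (dist x y / 2)) y = dist x y / 2 := by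
  obtain ⟨h0, h1, hd⟩ := hf
  have hxy : 0 ≤ dist x y := dist_nonneg
  constructor
  · have h := hd 0 ⟨le_refl 0, hxy⟩ (dist x y / 2) ⟨by linarith, by linarith⟩
    rw [h0] at h
    rw [h, zero_sub, abs_neg, abs_of_nonneg (by linarith)]
  · have h := hd (dist x y / 2) ⟨by linarith, by linarith⟩ (dist x y) ⟨hxy, le_refl _⟩
    rw [h1] at h
    rw [h, abs_of_nonpos (by linarith)]
    ring

variable {H : Type} [Group H] [MulAction H X]

lemma gp_smul (hiso : ∀ (h : H) (x y : X), dist (h • x) (h • y) = dist x y)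
    (h : H) (o x y : X) : gp (h • o) (h • x) (h • y) = gp o x y := by
  unfold gp; rw [hiso, hiso, hiso]

lemma growth (hiso : ∀ (h : H) (x y : X), dist (h • x) (h • y) = dist x y)
    {δ : ℝ} (hδ : 0 < δ)
    (hHyp : ∀ o x y z : X, min (gp o x z) (gp o z y) - δ ≤ gp o x y)
    (b : H) (o : X) (hgap : dist o (b • o) + 2 * δ < dist o ((b * b) • o)) :
    ∀ n : ℕ, (n : ℝ) * (dist o ((b * b) • o) - dist o (b • o) - 2 * δ)
      ≤ dist o ((b ^ n) • o) := by
  have hdinv : dist (b⁻¹ • o) o = dist o (b • o) := by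
    rw [← hiso b (b⁻¹ • o) o, smul_inv_smul, dist_comm]
  have hdbb : dist (b • o) (b⁻¹ • o) = dist o ((b * b) • o) := by
    have h := hiso b (b • o) (b⁻¹ • o)
    rw [smul_inv_smul, ← mul_smul] at h
    rw [← h, dist_comm]
  have hPid : 2 * gp o (b • o) (b⁻¹ • o)
      = 2 * dist o (b • o) - dist o ((b * b) • o) := by
    unfold gp
    rw [hdbb, hdinv, dist_comm (b • o) o]
    ring
  set L := dist o (b • o) with hL
  set P := gp o (b • o) (b⁻¹ • o) with hP
  set ε := dist o ((b * b) • o) - L - 2 * δ with hε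
  have hεpos : 0 < ε := by simp only [hε]; linarith
  have main : ∀ n : ℕ, gp ((b ^ n) • o) o ((b ^ (n + 1)) • o) ≤ P + δ ∧
      (n : ℝ) * ε ≤ dist o ((b ^ n) • o) := by
    intro n
    induction n with
    | zero =>
      constructor
      · have h0 : gp ((b ^ 0) • o) o ((b ^ 1) • o) = 0 := by
          simp only [pow_zero, one_smul, pow_one]
          unfold gp
          rw [dist_self, dist_comm o (b • o)]
          ring
        rw [h0]
        have := gp_nonneg o (b • o) (b⁻¹ • o)
        rw [← hP] at this
        linarith
      · simp
    | succ n ih =>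
      obtain ⟨ihA, ihd⟩ := ih
      have e0 : (b ^ (n + 1)) • o = (b ^ n) • (b • o) := by
        rw [pow_succ, mul_smul]
      have e1 : dist ((b ^ n) • o) ((b ^ (n + 1)) • o) = L := by
        rw [e0, hiso, hL]
      have e2 : (b ^ (n + 2)) • o = (b ^ (n + 1)) • (b • o) := by
        rw [pow_succ, mul_smul]
      have e3 : (b ^ n) • o = (b ^ (n + 1)) • (b⁻¹ • o) := by
        rw [← mul_smul, pow_succ, mul_assoc, mul_inv_cancel, mul_one]
      have egp1 : gp ((b ^ (n + 1)) • o) ((b ^ (n + 2)) • o) ((b ^ n) • o) = P := by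
        rw [e2, e3, hP]
        exact gp_smul hiso (b ^ (n + 1)) o (b • o) (b⁻¹ • o)
      have egp2 : gp ((b ^ (n + 1)) • o) o ((b ^ n) • o)
          = L - gp ((b ^ n) • o) o ((b ^ (n + 1)) • o) := by
        have h := gp_add o ((b ^ n) • o) ((b ^ (n + 1)) • o)
        rw [e1] at h
        linarith
      have hA' : gp ((b ^ (n + 1)) • o) o ((b ^ (n + 2)) • o) ≤ P + δ := by
        have happ := hHyp ((b ^ (n + 1)) • o) ((b ^ (n + 2)) • o) ((b ^ n) • o) o
        rw [egp1, egp2] at happ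
        have hbig : P + δ < L - gp ((b ^ n) • o) o ((b ^ (n + 1)) • o) := by
          simp only [hε] at hεpos
          linarith
        by_contra hc
        push_neg at hc
        have hc' : P + δ < gp ((b ^ (n + 1)) • o) ((b ^ (n + 2)) • o) o := by
          rw [gp_comm ((b ^ (n + 1)) • o) ((b ^ (n + 2)) • o) o]
          exact hc
        have hmin := lt_min hc' hbig
        linarith [happ, hmin]
      refine ⟨hA', ?_⟩
      have hdist : dist o ((b ^ (n + 1)) • o)
          = dist o ((b ^ n) • o) + L - 2 * gp ((b ^ n) • o) o ((b ^ (n + 1)) • o) := by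
        have hcm : dist ((b ^ (n + 1)) • o) ((b ^ n) • o) = L := by
          rw [dist_comm]; exact e1
        unfold gp
        rw [hcm]
        ring
      have : ((n : ℝ) + 1) * ε ≤ dist o ((b ^ (n + 1)) • o) := by
        rw [hdist]
        have hPe : L - 2 * (P + δ) = ε := by simp only [hε]; linarith
        nlinarith [ihA, ihd]
      simpa using this
  intro n
  have h := (main n).2
  simp only [hε] at h
  exact h

lemma goodcert (hiso : ∀ (h : H) (x y : X), dist (h • x) (h • y) = dist x y)
    {δ : ℝ} (hδ : 0 < δ)
    (hHyp : ∀ o x y z : X, min (gp o x z) (gp o z y) - δ ≤ gp o x y)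
    (b : H) (o o' : X)
    (hgap : dist o (b • o) + 2 * δ < dist o ((b * b) • o)) :
    ∃ τ > (0 : ℝ), Tendsto (fun n : ℕ => dist o' ((b ^ n) • o') / n) atTop (𝓝 τ) := by
  have hgrow := growth hiso hδ hHyp b o hgap
  set ε := dist o ((b * b) • o) - dist o (b • o) - 2 * δ with hε
  have hεpos : 0 < ε := by simp only [hε]; linarith
  set v : ℕ → ℝ := fun n => dist o' ((b ^ n) • o') with hv
  have hsub : Subadditive v := by
    intro p q
    have h1 : (b ^ (p + q)) • o' = (b ^ p) • ((b ^ q) • o') := by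
      rw [pow_add, mul_smul]
    calc v (p + q) = dist o' ((b ^ (p + q)) • o') := rfl
      _ ≤ dist o' ((b ^ p) • o') + dist ((b ^ p) • o') ((b ^ (p + q)) • o') :=
          dist_triangle _ _ _
      _ = v p + v q := by rw [h1, hiso (b ^ p) o' ((b ^ q) • o')]
  have hbdd : BddBelow (Set.range fun n : ℕ => v n / n) := by
    refine ⟨0, ?_⟩
    rintro x ⟨n, rfl⟩
    positivity
  have htl := hsub.tendsto_lim hbdd
  refine ⟨hsub.lim, ?_, htl⟩
  have hcomp : ∀ n : ℕ, 1 ≤ n → ε - 2 * dist o o' / n ≤ v n / n := by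
    intro n hn
    have hnpos : (0 : ℝ) < n := by exact_mod_cast hn
    have hvn : (n : ℝ) * ε - 2 * dist o o' ≤ v n := by
      have t1 := dist_triangle4 o o' ((b ^ n) • o') ((b ^ n) • o)
      have t2 : dist ((b ^ n) • o') ((b ^ n) • o) = dist o' o := hiso _ _ _
      have t3 := hgrow n
      simp only [hv]
      have t4 : dist o' o = dist o o' := dist_comm _ _
      linarith
    have heq : ε - 2 * dist o o' / n = ((n : ℝ) * ε - 2 * dist o o') / n := by
      field_simp
    rw [heq]
    exact (div_le_div_iff_of_pos_right hnpos).mpr hvn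
  have hconst : Tendsto (fun n : ℕ => ε - 2 * dist o o' / n) atTop (𝓝 ε) := by
    have h0 : Tendsto (fun n : ℕ => 2 * dist o o' / n) atTop (𝓝 0) :=
      tendsto_const_div_atTop_nhds_zero_nat _
    simpa using tendsto_const_nhds.sub h0
  have hle : ε ≤ hsub.lim :=
    le_of_tendsto_of_tendsto hconst htl (eventually_atTop.mpr ⟨1, hcomp⟩)
  linarith

lemma midpoint_moves (hiso : ∀ (h : H) (x y : X), dist (h • x) (h • y) = dist x y)
    {δ : ℝ} (hδ : 0 < δ)
    (hHyp : ∀ o x y z : X, min (gp o x z) (gp o z y) - δ ≤ gp o x y)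
    (g : H) (y : X) (f : ℝ → X) (hf : IsGeodesic f y (g • y))
    (hle : dist y ((g * g) • y) ≤ dist y (g • y) + 2 * δ) :
    dist (f (dist y (g • y) / 2)) (g • f (dist y (g • y) / 2)) ≤ 6 * δ := by
  have hm := geo_mid hf
  set Lg := dist y (g • y) with hLg
  set w := f (Lg / 2) with hw
  obtain ⟨hm1, hm2⟩ := hm
  -- hm1 : dist y w = Lg / 2, hm2 : dist w (g • y) = Lg / 2
  have e1 : dist ((g * g) • y) (g • y) = Lg := by
    rw [mul_smul, hiso g (g • y) y, dist_comm]
  have e2 : dist (g • w) (g • y) = Lg / 2 := by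
    rw [hiso g w y, dist_comm]
    exact hm1
  have e3 : dist ((g * g) • y) (g • w) = Lg / 2 := by
    rw [mul_smul, hiso g (g • y) w]
    exact dist_comm w (g • y) ▸ hm2
  have gpa : gp (g • y) w y = Lg / 2 := by
    unfold gp
    rw [hm2, dist_comm w y, hm1, show dist y (g • y) = Lg from rfl]
    ring
  have gpb : gp (g • y) ((g * g) • y) (g • w) = Lg / 2 := by
    unfold gp
    rw [e1, e2, e3]
    ring
  have gpc : Lg / 2 - δ ≤ gp (g • y) y ((g * g) • y) := by
    unfold gp
    rw [e1, show dist y (g • y) = Lg from rfl]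
    have : dist y ((g * g) • y) ≤ Lg + 2 * δ := hle
    linarith
  have t2 : Lg / 2 - 2 * δ ≤ gp (g • y) y (g • w) := by
    have happ := hHyp (g • y) y (g • w) ((g * g) • y)
    have hminb : Lg / 2 - δ ≤ min (gp (g • y) y ((g * g) • y))
        (gp (g • y) ((g * g) • y) (g • w)) := by
      refine le_min gpc ?_
      rw [gpb]
      linarith
    linarith
  have t1 : Lg / 2 - 3 * δ ≤ gp (g • y) w (g • w) := by
    have happ := hHyp (g • y) w (g • w) y
    have hminb : Lg / 2 - 2 * δ ≤ min (gp (g • y) w y) (gp (g • y) y (g • w)) := by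
      refine le_min ?_ t2
      rw [gpa]; linarith
    linarith
  have hfin : dist w (g • w) = dist w (g • y) + dist (g • w) (g • y)
      - 2 * gp (g • y) w (g • w) := by
    unfold gp
    ring
  rw [hfin, hm2, e2]
  linarith

end Stmt15Aux

/-- Koubi-type lemma: if every point is moved by at least `28δ` by some generator, then there
is a loxodromic element that is a product of at most two generators, whose displacement at some
point is at least `ℓ_X(S) - C`, with `C` depending only on `δ`. -/
theorem stmt15 (δ : ℝ) (hδ : 0 < δ) :
    ∃ C > (0 : ℝ),
      ∀ (X : Type) [MetricSpace X] [Nonempty X]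
        (H : Type) [Group H] [MulAction H X],
        (∀ h : H, Isometry fun x : X => h • x) →
        (∀ x y : X, ∃ f : ℝ → X, IsGeodesic f x y) →
        (∀ o x y z : X, min (gp o x z) (gp o z y) - δ ≤ gp o x y) →
        ∀ S : Set H, S.Finite → (∀ s ∈ S, s⁻¹ ∈ S) → Subgroup.closure S = ⊤ →
        -- `H` is non-elementary (in particular, not virtually cyclic):
        (¬ ∃ Z : Subgroup H, Z.FiniteIndex ∧ IsCyclic Z) →
        (⨅ x : X, ⨆ s ∈ S, dist x (s • x)) > 28 * δ →
        ∃ b ∈ wordBall S 2, ∃ o : X, ∃ τ > (0 : ℝ),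
          Tendsto (fun n : ℕ => dist o ((b ^ n) • o) / n) atTop (𝓝 τ) ∧
          dist o (b • o) ≥ (⨅ x : X, ⨆ s ∈ S, dist x (s • x)) - C := by
  refine ⟨6 * δ, by linarith, ?_⟩
  intro X _ _ H _ _ hisom hgeo hHyp S hSfin hSsymm hSgen hNE hInf
  have hiso : ∀ (h : H) (x y : X), dist (h • x) (h • y) = dist x y :=
    fun h x y => (hisom h).dist_eq x y
  set l := ⨅ x : X, ⨆ s ∈ S, dist x (s • x) with hldef
  have h28 : 28 * δ < l := hInf
  -- S is nonempty
  have hSne : S.Nonempty := by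
    rcases Set.eq_empty_or_nonempty S with hemp | h
    · exfalso
      have hzero : ∀ x : X, (⨆ s ∈ S, dist x (s • x)) = 0 := by
        intro x
        have h1 : ∀ s : H, (⨆ _ : s ∈ S, dist x (s • x)) = 0 := by
          intro s
          haveI : IsEmpty (s ∈ S) := by
            rw [hemp]
            exact ⟨fun hh => (Set.mem_empty_iff_false s).mp hh⟩
          exact Real.iSup_of_isEmpty _
        calc (⨆ s ∈ S, dist x (s • x)) = ⨆ _ : H, (0 : ℝ) := by
              exact iSup_congr h1
          _ = 0 := ciSup_const
      have : l = 0 := by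
        rw [hldef]
        have := hzero
        calc (⨅ x : X, ⨆ s ∈ S, dist x (s • x)) = ⨅ _ : X, (0 : ℝ) := iInf_congr hzero
          _ = 0 := ciInf_const
      rw [this] at h28
      linarith
    · exact h
  -- attained maximum of displacement over S at every point
  have haux : ∀ y : X, ∃ a ∈ S, (∀ s ∈ S, dist y (s • y) ≤ dist y (a • y)) ∧
      (⨆ s ∈ S, dist y (s • y)) = dist y (a • y) := by
    intro y
    obtain ⟨a, haS, hmax0⟩ :=
      Set.Finite.exists_maximalFor (fun s : H => dist y (s • y)) S hSfin hSne
    have hmax : ∀ s ∈ S, dist y (s • y) ≤ dist y (a • y) := by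
      intro s hs
      by_contra hc
      push_neg at hc
      have := hmax0 hs (le_of_lt hc)
      exact absurd this (not_le.mpr hc)
    refine ⟨a, haS, hmax, ?_⟩
    have hub : ∀ t : H, (⨆ _ : t ∈ S, dist y (t • y)) ≤ dist y (a • y) := by
      intro t
      by_cases ht : t ∈ S
      · haveI : Nonempty (t ∈ S) := ⟨ht⟩
        exact ciSup_le fun _ => hmax t ht
      · haveI : IsEmpty (t ∈ S) := ⟨fun hh => ht hh⟩
        rw [Real.iSup_of_isEmpty]
        exact dist_nonneg
    apply le_antisymm
    · exact ciSup_le hub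
    · have h1 : dist y (a • y) = ⨆ _ : a ∈ S, dist y (a • y) := by
        haveI : Nonempty (a ∈ S) := ⟨haS⟩
        exact (ciSup_const).symm
      rw [h1]
      exact le_ciSup ⟨dist y (a • y), by rintro r ⟨t, rfl⟩; exact hub t⟩ a
  have hl0 : ∀ y : X, l ≤ ⨆ s ∈ S, dist y (s • y) := by
    intro y
    rw [hldef]
    apply ciInf_le
    refine ⟨0, ?_⟩
    rintro r ⟨z, rfl⟩
    obtain ⟨c, hcS, -, hceq⟩ := haux z
    show (0 : ℝ) ≤ ⨆ s ∈ S, dist z (s • z)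
    rw [hceq]
    exact dist_nonneg
  -- base point and maximal generator
  obtain ⟨x₀⟩ := (inferInstance : Nonempty X)
  obtain ⟨a, haS, hamax, hasup⟩ := haux x₀
  have hlL : l ≤ dist x₀ (a • x₀) := by
    have := hl0 x₀
    rwa [hasup] at this
  by_cases hA : dist x₀ (a • x₀) + 2 * δ < dist x₀ ((a * a) • x₀)
  · -- Case A : a itself is loxodromic with large displacement at x₀
    obtain ⟨τ, hτ, htd⟩ := Stmt15Aux.goodcert hiso hδ hHyp a x₀ x₀ hA
    refine ⟨a, ⟨[a], by norm_num, ?_, by simp⟩, x₀, τ, hτ, htd, ?_⟩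
    · intro x hx
      simp only [List.mem_singleton] at hx
      rwa [hx]
    · linarith
  · push_neg at hA
    obtain ⟨f₁, hf₁⟩ := hgeo x₀ (a • x₀)
    set m := f₁ (dist x₀ (a • x₀) / 2) with hmdef
    have hmam : dist m (a • m) ≤ 6 * δ := by
      rw [hmdef]
      exact Stmt15Aux.midpoint_moves hiso hδ hHyp a x₀ f₁ hf₁ hA
    have hxm : dist x₀ m = dist x₀ (a • x₀) / 2 := by
      rw [hmdef]; exact (Stmt15Aux.geo_mid hf₁).1
    have hmax' : dist m (a • x₀) = dist x₀ (a • x₀) / 2 := by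
      rw [hmdef]; exact (Stmt15Aux.geo_mid hf₁).2
    obtain ⟨s, hsS, hsmax, hssup⟩ := haux m
    have hlR : l ≤ dist m (s • m) := by
      have := hl0 m
      rwa [hssup] at this
    by_cases hB1 : dist m (s • m) + 2 * δ < dist m ((s * s) • m)
    · -- Case B1 : s is loxodromic with large displacement at m
      obtain ⟨τ, hτ, htd⟩ := Stmt15Aux.goodcert hiso hδ hHyp s m m hB1
      refine ⟨s, ⟨[s], by norm_num, ?_, by simp⟩, m, τ, hτ, htd, ?_⟩
      · intro x hx
        simp only [List.mem_singleton] at hx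
        rwa [hx]
      · linarith
    · push_neg at hB1
      by_cases hB2a : 4 * δ < gp m (s • m) x₀
      · -- Case B2a : b = a * s works at m
        have hD : dist m (s • m) - 6 * δ ≤ dist m ((a * s) • m) := by
          have t1 : dist (a • m) ((a * s) • m) = dist m (s • m) := by
            rw [mul_smul, hiso]
          have t2 := dist_triangle (a • m) m ((a * s) • m)
          have t3 : dist (a • m) m = dist m (a • m) := dist_comm _ _
          linarith
        have e2 : dist ((a * s) • m) (a • x₀) = dist (s • m) x₀ := by
          rw [mul_smul, hiso]
        have e3 : dist (s • m) x₀
            = dist m (s • m) + dist x₀ (a • x₀) / 2 - 2 * gp m (s • m) x₀ := by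
          have : gp m (s • m) x₀
              = (dist (s • m) m + dist x₀ m - dist (s • m) x₀) / 2 := rfl
          rw [dist_comm (s • m) m, hxm] at this
          linarith
        have h1 : gp m (s • m) x₀ - 3 * δ ≤ gp m ((a * s) • m) (a • x₀) := by
          have : gp m ((a * s) • m) (a • x₀)
              = (dist ((a * s) • m) m + dist (a • x₀) m - dist ((a * s) • m) (a • x₀)) / 2 := rfl
          rw [e2, e3, dist_comm ((a * s) • m) m, dist_comm (a • x₀) m, hmax'] at this
          linarith
        have h2 : gp m x₀ (a • x₀) = 0 := by
          have : gp m x₀ (a • x₀)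
              = (dist x₀ m + dist (a • x₀) m - dist x₀ (a • x₀)) / 2 := rfl
          rw [dist_comm (a • x₀) m, hxm, hmax'] at this
          linarith
        have h3 : gp m x₀ ((a * s) • m) ≤ δ := by
          have happ := hHyp m x₀ (a • x₀) ((a * s) • m)
          rw [h2] at happ
          by_contra hc
          push_neg at hc
          have hmin := lt_min hc (show δ < gp m ((a * s) • m) (a • x₀) by linarith)
          linarith
        have h4 : (dist m (s • m) - 2 * δ) / 2 ≤ gp m (s⁻¹ • m) (s • m) := by
          have q1 : dist (s⁻¹ • m) m = dist m (s • m) := by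
            rw [← hiso s (s⁻¹ • m) m, smul_inv_smul, dist_comm]
          have q2 : dist (s⁻¹ • m) (s • m) = dist m ((s * s) • m) := by
            have hq := hiso s (s⁻¹ • m) (s • m)
            rw [smul_inv_smul, ← mul_smul] at hq
            rw [← hq, dist_comm]
          have : gp m (s⁻¹ • m) (s • m)
              = (dist (s⁻¹ • m) m + dist (s • m) m - dist (s⁻¹ • m) (s • m)) / 2 := rfl
          rw [q1, q2, dist_comm (s • m) m] at this
          linarith
        have h5 : 2 * δ < gp m (s⁻¹ • m) x₀ := by
          have happ := hHyp m (s⁻¹ • m) x₀ (s • m)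
          have k1 : 3 * δ < gp m (s⁻¹ • m) (s • m) := by
            have : 8 * δ < dist m (s • m) := by linarith
            linarith
          have hminb : 3 * δ < min (gp m (s⁻¹ • m) (s • m)) (gp m (s • m) x₀) :=
            lt_min k1 (by linarith)
          linarith
        have h6 : gp m ((a * s) • m) (s⁻¹ • m) ≤ 2 * δ := by
          have happ := hHyp m ((a * s) • m) x₀ (s⁻¹ • m)
          have h3' : gp m ((a * s) • m) x₀ ≤ δ := by
            rw [Stmt15Aux.gp_comm]; exact h3
          by_contra hc
          push_neg at hc
          have hmin := lt_min hc h5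
          linarith
        have h7 : gp m ((a * s) • m) ((a * s)⁻¹ • m) ≤ 8 * δ := by
          have lip := Stmt15Aux.gp_lipschitz m ((a * s) • m) ((a * s)⁻¹ • m) (s⁻¹ • m)
          have q : dist ((a * s)⁻¹ • m) (s⁻¹ • m) ≤ 6 * δ := by
            have hq1 : (a * s)⁻¹ • m = s⁻¹ • (a⁻¹ • m) := by
              rw [mul_inv_rev, mul_smul]
            have hq2 : dist (s⁻¹ • (a⁻¹ • m)) (s⁻¹ • m) = dist (a⁻¹ • m) m :=
              hiso s⁻¹ _ _
            have hq3 : dist (a⁻¹ • m) m = dist m (a • m) := by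
              rw [← hiso a (a⁻¹ • m) m, smul_inv_smul, dist_comm]
            rw [hq1, hq2, hq3]
            exact hmam
          have lip2 := Stmt15Aux.gp_lipschitz m ((a * s) • m) (s⁻¹ • m) ((a * s)⁻¹ • m)
          have : dist (s⁻¹ • m) ((a * s)⁻¹ • m) ≤ 6 * δ := by
            rw [dist_comm]; exact q
          linarith
        have hgap2 : dist m ((a * s) • m) + 2 * δ < dist m (((a * s) * (a * s)) • m) := by
          have q1 : dist ((a * s)⁻¹ • m) m = dist m ((a * s) • m) := by
            rw [← hiso (a * s) ((a * s)⁻¹ • m) m, smul_inv_smul, dist_comm]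
          have q2 : dist ((a * s) • m) ((a * s)⁻¹ • m)
              = dist m (((a * s) * (a * s)) • m) := by
            have hq := hiso (a * s) ((a * s) • m) ((a * s)⁻¹ • m)
            rw [smul_inv_smul, ← mul_smul] at hq
            rw [← hq, dist_comm]
          have hid : gp m ((a * s) • m) ((a * s)⁻¹ • m)
              = (dist ((a * s) • m) m + dist ((a * s)⁻¹ • m) m
                - dist ((a * s) • m) ((a * s)⁻¹ • m)) / 2 := rfl
          rw [q1, q2, dist_comm ((a * s) • m) m] at hid
          -- dist m ((a*s)*(a*s))•m) = 2 D - 2 P with P ≤ 8δ and D ≥ l - 6δ > 22δ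
          have hDl : l - 6 * δ ≤ dist m ((a * s) • m) := by linarith
          linarith
        obtain ⟨τ, hτ, htd⟩ := Stmt15Aux.goodcert hiso hδ hHyp (a * s) m m hgap2
        refine ⟨a * s, ⟨[a, s], by norm_num, ?_, by simp⟩, m, τ, hτ, htd, ?_⟩
        · intro x hx
          simp only [List.mem_cons, List.not_mem_nil, or_false] at hx
          rcases hx with hx | hx <;> rwa [hx]
        · linarith
      · push_neg at hB2a
        by_cases hB2bi : dist x₀ (s • x₀) + 2 * δ < dist x₀ ((s * s) • x₀)
        · -- Case B2b-i : s loxodromic via x₀, large displacement at m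
          obtain ⟨τ, hτ, htd⟩ := Stmt15Aux.goodcert hiso hδ hHyp s x₀ m hB2bi
          refine ⟨s, ⟨[s], by norm_num, ?_, by simp⟩, m, τ, hτ, htd, ?_⟩
          · intro x hx
            simp only [List.mem_singleton] at hx
            rwa [hx]
          · linarith
        · push_neg at hB2bi
          exfalso
          obtain ⟨f₂, hf₂⟩ := hgeo x₀ (s • x₀)
          set w := f₂ (dist x₀ (s • x₀) / 2) with hwdef
          have hwsw : dist w (s • w) ≤ 6 * δ := by
            rw [hwdef]
            exact Stmt15Aux.midpoint_moves hiso hδ hHyp s x₀ f₂ hf₂ hB2bi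
          have hxw : dist x₀ w = dist x₀ (s • x₀) / 2 := by
            rw [hwdef]; exact (Stmt15Aux.geo_mid hf₂).1
          have hLsL : dist x₀ (s • x₀) ≤ dist x₀ (a • x₀) := hamax s hsS
          have hwm : dist (s • w) (s • m) = dist w m := hiso s w m
          by_cases hsub : gp m w (s • m) ≤ gp m (s • m) x₀ + δ
          · -- first contradiction subcase
            have i1 : dist w (s • m)
                = dist w m + dist m (s • m) - 2 * gp m w (s • m) := by
              have : gp m w (s • m)
                  = (dist w m + dist (s • m) m - dist w (s • m)) / 2 := rfl
              rw [dist_comm (s • m) m] at this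
              linarith
            have i2 : dist w (s • m) ≤ 6 * δ + dist w m := by
              have := dist_triangle w (s • w) (s • m)
              rw [hwm] at this
              linarith
            -- dist m (s•m) ≤ 2 σ + 8 δ ≤ 16 δ < 28 δ < l
            linarith
          · push_neg at hsub
            have j3 : gp m x₀ w ≤ gp m (s • m) x₀ + δ := by
              have happ := hHyp m x₀ (s • m) w
              have j2 : gp m x₀ (s • m) = gp m (s • m) x₀ := Stmt15Aux.gp_comm _ _ _
              by_contra hc
              push_neg at hc
              have hmin := lt_min hc hsub
              rw [j2] at happ
              linarith
            have j4 : dist w m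
                = 2 * gp m x₀ w + dist x₀ w - dist x₀ m := by
              have : gp m x₀ w = (dist x₀ m + dist w m - dist x₀ w) / 2 := rfl
              linarith
            have j5 : dist m (s • m) ≤ 2 * dist w m + 6 * δ := by
              have := dist_triangle4 m w (s • w) (s • m)
              rw [hwm] at this
              have hmw : dist m w = dist w m := dist_comm _ _
              linarith
            -- dist w m ≤ 2σ + 2δ + (Ls - L)/2 ≤ 2σ + 2δ ≤ 10 δ, so R ≤ 26 δ < 28δ < l
            linarith
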